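/- arXiv:2011.05681 — 3 statements merged into one kernel-verified Lean document; each statement's English description precedes it below -/
import Mathlib

section
/- Under the hypotheses of the previous ODE (with α ≠ (n−1)/(2n)), the solution w satisfies w' > 0 on (δ, R+ε), w' is decreasing there, and hence for all r ∈ (δ, R+ε): 0 ≤ w(r) ≤ C(n, α, R/δ) · (r − δ), where one may take C = 2(n+1)/(2α+n−1) · δ · [((R+ε)/δ)^{(n+2α−1)/((n+1)α)} − 1] / δ, i.e. w(r) ≤ w'(δ⁺)(r − δ). -/
set_option maxHeartbeats 1000000 in
theorem stmt_7 (n : ℕ) (hn : 2 ≤ n) (α δ R ε : ℝ)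
    (hα0 : 0 < α) (hα1 : α < 1) (hαn : α ≠ ((n : ℝ) - 1) / (2 * n))
    (hδ : 0 < δ) (hδR : δ < R) (hε : 0 < ε)
    (c₁ : ℝ)
    (hc₁ : c₁ = 2 * ((n : ℝ) + 1) ^ 2 * α /
        ((2 * α + (n : ℝ) - 1) * (2 * α * (n : ℝ) - (n : ℝ) + 1)) *
        (R + ε) ^ (((n : ℝ) + 2 * α - 1) / (((n : ℝ) + 1) * α)))
    (W : ℝ → ℝ)
    (hW : W = fun r : ℝ =>
      -(((n : ℝ) + 1) / (2 * α + (n : ℝ) - 1)) * r ^ 2 +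
        c₁ * r ^ ((2 * α * (n : ℝ) - (n : ℝ) + 1) / (((n : ℝ) + 1) * α)))
    (w : ℝ → ℝ) (hw : w = fun r : ℝ => W r - W δ)
    (C : ℝ)
    (hC : C = 2 * ((n : ℝ) + 1) / (2 * α + (n : ℝ) - 1) * δ *
        (((R + ε) / δ) ^ (((n : ℝ) + 2 * α - 1) / (((n : ℝ) + 1) * α)) - 1)) :
    (∀ r ∈ Set.Ioo δ (R + ε), 0 < deriv w r) ∧
      StrictAntiOn (deriv w) (Set.Ioo δ (R + ε)) ∧
      ∀ r ∈ Set.Ioo δ (R + ε), 0 ≤ w r ∧ w r ≤ C * (r - δ) := by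
  have hn2 : (2:ℝ) ≤ (n:ℝ) := by exact_mod_cast hn
  set A : ℝ := ((n:ℝ) + 1) / (2 * α + (n:ℝ) - 1) with hA
  set β : ℝ := (2 * α * (n:ℝ) - (n:ℝ) + 1) / (((n:ℝ) + 1) * α) with hβ
  set γ : ℝ := ((n:ℝ) + 2 * α - 1) / (((n:ℝ) + 1) * α) with hγdef
  have hRε : 0 < R + ε := by linarith
  set K : ℝ := (R + ε) ^ γ with hK
  have hd1 : 0 < 2 * α + (n:ℝ) - 1 := by nlinarith
  have hd3 : 0 < ((n:ℝ) + 1) * α := by nlinarith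
  have hd2 : (2 * α * (n:ℝ) - (n:ℝ) + 1) ≠ 0 := by
    intro h
    apply hαn
    have hn0 : (2 * (n:ℝ)) ≠ 0 := by positivity
    field_simp
    linarith
  have hγpos : 0 < γ := by
    apply div_pos _ hd3; nlinarith
  have hA0 : 0 < A := by apply div_pos _ hd1; linarith
  have hK0 : 0 < K := Real.rpow_pos_of_pos hRε γ
  have hβ1 : β - 1 < 0 := by
    have h : β - 1 = ((n:ℝ) - 1) * (α - 1) / (((n:ℝ) + 1) * α) := by
      rw [hβ]; field_simp; ring
    rw [h]
    apply div_neg_of_neg_of_pos _ hd3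
    nlinarith
  have hγβ : γ + (β - 1) = 1 := by
    rw [hβ, hγdef]; field_simp; ring
  have hβγ : β - 1 = 1 - γ := by linarith
  have hc₁β : c₁ * β = 2 * A * K := by
    rw [hc₁, hβ, hA, hK, hγdef]
    field_simp
    ring_nf
    have hd2' : (1 - (n:ℝ) + (n:ℝ) * α * 2) ≠ 0 := by contrapose! hd2; linarith
    field_simp
    ring
  clear_value A β γ K
  -- derivative of w
  have hw' : ∀ r : ℝ, 0 < r → HasDerivAt w (2 * A * (K * r ^ (β - 1) - r)) r := by
    intro r hr
    have h1 : HasDerivAt (fun x : ℝ => x ^ 2) (2 * r) r := by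
      simpa using hasDerivAt_pow 2 r
    have h2 : HasDerivAt (fun x : ℝ => x ^ β) (β * r ^ (β - 1)) r :=
      Real.hasDerivAt_rpow_const (Or.inl hr.ne')
    have h3 : HasDerivAt W (-A * (2 * r) + c₁ * (β * r ^ (β - 1))) r := by
      rw [hW]
      exact (h1.const_mul (-A)).add (h2.const_mul c₁)
    have h4 : HasDerivAt w (-A * (2 * r) + c₁ * (β * r ^ (β - 1))) r := by
      rw [hw]; exact h3.sub_const _
    convert h4 using 1
    linear_combination (-(r ^ (β - 1))) * hc₁β
  have hmono : ∀ x y : ℝ, 0 < x → x < y →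
      2 * A * (K * y ^ (β - 1) - y) < 2 * A * (K * x ^ (β - 1) - x) := by
    intro x y hx hxy
    have h1 : y ^ (β - 1) < x ^ (β - 1) := Real.rpow_lt_rpow_of_neg hx hxy hβ1
    have h2 : 2 * A * K * y ^ (β - 1) < 2 * A * K * x ^ (β - 1) := by
      apply mul_lt_mul_of_pos_left h1; positivity
    nlinarith
  have hpos : ∀ r ∈ Set.Ioo δ (R + ε), 0 < 2 * A * (K * r ^ (β - 1) - r) := by
    intro r hr
    have hr0 : 0 < r := hδ.trans hr.1
    have h1 : r ^ γ < K := by rw [hK]; exact Real.rpow_lt_rpow hr0.le hr.2 hγpos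
    have h2 : r ^ γ * r ^ (β - 1) = r := by
      rw [← Real.rpow_add hr0, hγβ, Real.rpow_one]
    have h3 : (0:ℝ) < r ^ (β - 1) := Real.rpow_pos_of_pos hr0 _
    have h4 : r < K * r ^ (β - 1) := by
      calc r = r ^ γ * r ^ (β - 1) := h2.symm
        _ < K * r ^ (β - 1) := mul_lt_mul_of_pos_right h1 h3
    have : 0 < K * r ^ (β - 1) - r := by linarith
    positivity
  have hδγ : (0:ℝ) < δ ^ γ := Real.rpow_pos_of_pos hδ γ
  have hCφ : C = 2 * A * (K * δ ^ (β - 1) - δ) := by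
    have hdiv : ((R + ε) / δ) ^ γ = K / δ ^ γ := by rw [hK]; exact Real.div_rpow hRε.le hδ.le γ
    have hδ1γ : δ ^ (β - 1) = δ / δ ^ γ := by
      rw [hβγ, Real.rpow_sub hδ, Real.rpow_one]
    rw [hC, hdiv, hδ1γ, hA]
    field_simp
  have hwC : ContinuousOn w (Set.Icc δ (R + ε)) := fun r hr =>
    ((hw' r (lt_of_lt_of_le hδ hr.1)).continuousAt).continuousWithinAt
  have hwmono : StrictMonoOn w (Set.Icc δ (R + ε)) := by
    apply strictMonoOn_of_deriv_pos (convex_Icc _ _) hwC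
    intro x hx
    rw [interior_Icc] at hx
    rw [(hw' x (hδ.trans hx.1)).deriv]
    exact hpos x hx
  have hwδ : w δ = 0 := by rw [hw]; simp
  refine ⟨?_, ?_, ?_⟩
  · intro r hr
    rw [(hw' r (hδ.trans hr.1)).deriv]
    exact hpos r hr
  · intro x hx y hy hxy
    rw [(hw' y (hδ.trans hy.1)).deriv, (hw' x (hδ.trans hx.1)).deriv]
    exact hmono x y (hδ.trans hx.1) hxy
  · intro r hr
    have hrIcc : r ∈ Set.Icc δ (R + ε) := ⟨hr.1.le, hr.2.le⟩
    have hδIcc : δ ∈ Set.Icc δ (R + ε) := ⟨le_refl _, by linarith [hr.2, hr.1]⟩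
    have h0 : 0 < w r := by
      have := hwmono hδIcc hrIcc hr.1
      rwa [hwδ] at this
    constructor
    · exact h0.le
    · set g : ℝ → ℝ := fun x => C * (x - δ) - w x with hg
      have hg' : ∀ x : ℝ, 0 < x →
          HasDerivAt g (C - 2 * A * (K * x ^ (β - 1) - x)) x := by
        intro x hx
        have h1 : HasDerivAt (fun y : ℝ => C * (y - δ)) C x := by
          simpa using ((hasDerivAt_id x).sub_const δ).const_mul C
        exact h1.sub (hw' x hx)
      have hgC : ContinuousOn g (Set.Icc δ (R + ε)) := fun x hx =>
        ((hg' x (lt_of_lt_of_le hδ hx.1)).continuousAt).continuousWithinAt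
      have hgmono : StrictMonoOn g (Set.Icc δ (R + ε)) := by
        apply strictMonoOn_of_deriv_pos (convex_Icc _ _) hgC
        intro x hx
        rw [interior_Icc] at hx
        rw [(hg' x (hδ.trans hx.1)).deriv]
        have := hmono δ x hδ hx.1
        rw [← hCφ] at this
        linarith
      have hgδ : g δ = 0 := by simp [hg, hwδ]
      have := hgmono hδIcc hrIcc hr.1
      rw [hgδ] at this
      simp only [hg] at this
      linarith
end

section
/- Fix r > 0, ε > 0 with ε < r, and α, β ∈ [0,1] with α + β = 1. For a unit vector ν at angle θ ∈ [0, π] to the radial direction, define A(θ) = α√(r² + 2rε cos θ + ε²) + β · (average over y in the (n−1)-disk T_ε = {y : |y| ≤ ε, y ⊥ e_n} of √(r² − 2r y_{n−1} sin θ + |y|²)). Then A attains its maximum on [0, π] at θ = 0; in particular A(θ) ≤ α(r + ε) + β·(average over T_ε of √(r² + |y|²)). -/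
open MeasureTheory

lemma aux_sqrt_pair (a b : ℝ) (ha : 0 ≤ a) (hb : |b| ≤ a) :
    Real.sqrt (a + b) + Real.sqrt (a - b) ≤ 2 * Real.sqrt a := by
  obtain ⟨hb1, hb2⟩ := abs_le.1 hb
  have h1 : (0:ℝ) ≤ a + b := by linarith
  have h2 : (0:ℝ) ≤ a - b := by linarith
  have hxy : Real.sqrt (a + b) * Real.sqrt (a - b) ≤ a := by
    rw [← Real.sqrt_mul h1]
    calc Real.sqrt ((a + b) * (a - b)) ≤ Real.sqrt (a ^ 2) := by
          apply Real.sqrt_le_sqrt; nlinarith [sq_nonneg b]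
      _ = a := Real.sqrt_sq ha
  have key : Real.sqrt (a + b) + Real.sqrt (a - b) ≤ Real.sqrt (4 * a) := by
    rw [Real.le_sqrt (by positivity)]
    · nlinarith [Real.sq_sqrt h1, Real.sq_sqrt h2]
    · positivity
  calc _ ≤ Real.sqrt (4 * a) := key
    _ = 2 * Real.sqrt a := by
        rw [show (4:ℝ) * a = 2 ^ 2 * a by ring, Real.sqrt_mul (by positivity),
          Real.sqrt_sq (by norm_num)]

lemma aux_coord_sq (m : ℕ) (y : EuclideanSpace ℝ (Fin (m + 1))) :
    (y (Fin.last m)) ^ 2 ≤ ‖y‖ ^ 2 := by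
  have h := EuclideanSpace.norm_eq y
  have h2 : ‖y‖ ^ 2 = ∑ i, ‖y i‖ ^ 2 := by
    rw [h, Real.sq_sqrt (by positivity)]
  rw [h2]
  have := Finset.single_le_sum (f := fun i => ‖y i‖ ^ 2)
    (fun i _ => by positivity) (Finset.mem_univ (Fin.last m))
  simpa [sq_abs] using this

theorem stmt_8 (m : ℕ) (r ε α β : ℝ) (hr : 0 < r) (hε : 0 < ε) (hεr : ε < r)
    (hα : 0 ≤ α) (hβ : 0 ≤ β) (hαβ : α + β = 1)
    (A : ℝ → ℝ)
    (hA : A = fun θ : ℝ =>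
      α * Real.sqrt (r ^ 2 + 2 * r * ε * Real.cos θ + ε ^ 2) +
        β * ⨍ y in Metric.closedBall (0 : EuclideanSpace ℝ (Fin (m + 1))) ε,
          Real.sqrt (r ^ 2 - 2 * r * y (Fin.last m) * Real.sin θ + ‖y‖ ^ 2)) :
    ∀ θ ∈ Set.Icc (0 : ℝ) Real.pi,
      A θ ≤ A 0 ∧
        A θ ≤ α * (r + ε) +
          β * ⨍ y in Metric.closedBall (0 : EuclideanSpace ℝ (Fin (m + 1))) ε,
            Real.sqrt (r ^ 2 + ‖y‖ ^ 2) := by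
  have hA0 : A 0 = α * (r + ε) +
      β * ⨍ y in Metric.closedBall (0 : EuclideanSpace ℝ (Fin (m + 1))) ε,
        Real.sqrt (r ^ 2 + ‖y‖ ^ 2) := by
    rw [hA]
    simp only [Real.cos_zero, Real.sin_zero, mul_zero, zero_mul, mul_one, sub_zero]
    rw [show r ^ 2 + 2 * r * ε + ε ^ 2 = (r + ε) ^ 2 by ring,
      Real.sqrt_sq (by linarith)]
  rintro θ ⟨hθ0, hθπ⟩
  have hsin : 0 ≤ Real.sin θ := Real.sin_nonneg_of_nonneg_of_le_pi hθ0 hθπ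
  have hsin1 : Real.sin θ ≤ 1 := Real.sin_le_one θ
  set S := Metric.closedBall (0 : EuclideanSpace ℝ (Fin (m + 1))) ε with hS
  set g : EuclideanSpace ℝ (Fin (m + 1)) → ℝ :=
    fun y => Real.sqrt (r ^ 2 - 2 * r * y (Fin.last m) * Real.sin θ + ‖y‖ ^ 2) with hg
  set h : EuclideanSpace ℝ (Fin (m + 1)) → ℝ :=
    fun y => Real.sqrt (r ^ 2 + ‖y‖ ^ 2) with hh
  have hgc : Continuous g := by
    apply Real.continuous_sqrt.comp
    fun_prop
  have hhc : Continuous h := by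
    apply Real.continuous_sqrt.comp
    fun_prop
  have hgI : IntegrableOn g S := hgc.continuousOn.integrableOn_compact
    (isCompact_closedBall _ _)
  have hhI : IntegrableOn h S := hhc.continuousOn.integrableOn_compact
    (isCompact_closedBall _ _)
  have hgnI : IntegrableOn (fun y => g (-y)) S :=
    (hgc.comp continuous_neg).continuousOn.integrableOn_compact (isCompact_closedBall _ _)
  -- symmetry of the set integral
  have hsym : ∫ y in S, g (-y) = ∫ y in S, g y := by
    rw [← integral_indicator measurableSet_closedBall,
      ← integral_indicator measurableSet_closedBall]
    have : S.indicator (fun y => g (-y)) = fun y => S.indicator g (-y) := by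
      funext x
      simp [Set.indicator, hS, Metric.mem_closedBall, dist_zero_right, norm_neg]
    rw [this, integral_neg_eq_self]
  -- pointwise inequality after symmetrization
  have hpt : ∀ y, g y + g (-y) ≤ 2 * h y := by
    intro y
    have hcoord : (y (Fin.last m)) ^ 2 ≤ ‖y‖ ^ 2 := aux_coord_sq m y
    have habs : |y (Fin.last m)| ≤ ‖y‖ := by
      rw [← Real.sqrt_sq_eq_abs, ← Real.sqrt_sq (norm_nonneg y)]
      exact Real.sqrt_le_sqrt hcoord
    have hb : |2 * r * y (Fin.last m) * Real.sin θ| ≤ r ^ 2 + ‖y‖ ^ 2 := by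
      have h1 : |2 * r * y (Fin.last m) * Real.sin θ|
          = 2 * r * |y (Fin.last m)| * Real.sin θ := by
        rw [abs_mul, abs_mul, abs_mul]
        rw [abs_of_nonneg (by norm_num : (0:ℝ) ≤ 2), abs_of_nonneg hr.le,
          abs_of_nonneg hsin]
      rw [h1]
      nlinarith [abs_nonneg (y (Fin.last m)), sq_nonneg (r - ‖y‖), norm_nonneg y,
        mul_nonneg (mul_nonneg (by norm_num : (0:ℝ) ≤ 2) hr.le) (abs_nonneg (y (Fin.last m)))]
    have := aux_sqrt_pair (r ^ 2 + ‖y‖ ^ 2) (-(2 * r * y (Fin.last m) * Real.sin θ))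
      (by positivity) (by rwa [abs_neg])
    have hgy : g y = Real.sqrt (r ^ 2 + ‖y‖ ^ 2 + -(2 * r * y (Fin.last m) * Real.sin θ)) := by
      rw [hg]; ring_nf
    have hgny : g (-y) = Real.sqrt (r ^ 2 + ‖y‖ ^ 2 - -(2 * r * y (Fin.last m) * Real.sin θ)) := by
      rw [hg]
      simp only [norm_neg]
      congr 1
      have : (-y) (Fin.last m) = -(y (Fin.last m)) := rfl
      rw [this]; ring
    rw [hgy, hgny, hh]
    linarith
  -- integral inequality
  have hint : ∫ y in S, g y ≤ ∫ y in S, h y := by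
    have h1 : ∫ y in S, g y = ∫ y in S, (g y + g (-y)) / 2 := by
      rw [integral_div, integral_add hgI hgnI, hsym]
      ring
    rw [h1]
    apply setIntegral_mono_on ((hgI.add hgnI).div_const 2) hhI measurableSet_closedBall
    intro y _
    have := hpt y
    simp only [Pi.add_apply]
    linarith
  -- average inequality
  have havg : (⨍ y in S, g y) ≤ ⨍ y in S, h y := by
    rw [setAverage_eq, setAverage_eq]
    simp only [smul_eq_mul]
    exact mul_le_mul_of_nonneg_left hint (by positivity)
  have hsqrt1 : Real.sqrt (r ^ 2 + 2 * r * ε * Real.cos θ + ε ^ 2) ≤ r + ε := by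
    calc Real.sqrt (r ^ 2 + 2 * r * ε * Real.cos θ + ε ^ 2)
        ≤ Real.sqrt ((r + ε) ^ 2) := by
          apply Real.sqrt_le_sqrt
          nlinarith [Real.cos_le_one θ, mul_pos hr hε]
      _ = r + ε := Real.sqrt_sq (by linarith)
  have hmain : A θ ≤ α * (r + ε) +
      β * ⨍ y in Metric.closedBall (0 : EuclideanSpace ℝ (Fin (m + 1))) ε,
        Real.sqrt (r ^ 2 + ‖y‖ ^ 2) := by
    rw [hA]
    have h1 := mul_le_mul_of_nonneg_left hsqrt1 hα
    have h2 := mul_le_mul_of_nonneg_left havg hβ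
    simp only
    exact add_le_add h1 h2
  exact ⟨hA0 ▸ hmain, hmain⟩
end

section
/- Let r > 0, ε > 0, and let T_ε be the (n−1)-dimensional disk of radius ε centered at 0 orthogonal to a unit vector ν in ℝⁿ, and let x ∈ ℝⁿ, z ∈ ℝⁿ with |x − z| = r ≥ ε and ν = (x−z)/|x−z|. Then for every h ∈ T_ε, r ≤ |x + h − z| ≤ √(r² + ε²), and consequently 0 ≤ (average over h ∈ T_ε of |x + h − z|) − r ≤ ε²/(2r). -/
open MeasureTheory Metric Set NNReal ENNReal

private lemma euclid_ball_meas {m : ℕ} (hm : 1 ≤ m) (ε : ℝ) (hε : 0 < ε) :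
    0 < μH[(m:ℝ)] (closedBall (0 : EuclideanSpace ℝ (Fin m)) ε) ∧
    μH[(m:ℝ)] (closedBall (0 : EuclideanSpace ℝ (Fin m)) ε) < ∞ := by
  have : Nonempty (Fin m) := ⟨⟨0, hm⟩⟩
  set c : ℝ≥0 := (Fintype.card (Fin m) : ℝ≥0) ^ ((1:ℝ≥0∞)/2).toReal with hc
  have hanti : AntilipschitzWith c (WithLp.equiv 2 (Fin m → ℝ)) :=
    PiLp.antilipschitzWith_ofLp 2 _
  have hlip : LipschitzWith 1 (WithLp.equiv 2 (Fin m → ℝ)) := PiLp.lipschitzWith_ofLp 2 _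
  have hcc : (0:ℝ≥0) < c := NNReal.rpow_pos (by exact_mod_cast Fintype.card_pos)
  have hc0 : (0:ℝ) < c := hcc
  have hpi : (μH[(m:ℝ)] : Measure (Fin m → ℝ)) = volume := by
    simpa using hausdorffMeasure_pi_real (ι := Fin m)
  constructor
  · have hsub : closedBall (0 : Fin m → ℝ) (ε / c) ⊆
        (WithLp.equiv 2 (Fin m → ℝ)) '' closedBall 0 ε := by
      intro y hy
      refine ⟨(WithLp.equiv 2 (Fin m → ℝ)).symm y, ?_, by simp⟩
      simp only [mem_closedBall, dist_zero_right] at hy ⊢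
      have := hanti.le_mul_dist ((WithLp.equiv 2 (Fin m → ℝ)).symm y) 0
      simp only [Equiv.apply_symm_apply] at this
      calc ‖(WithLp.equiv 2 (Fin m → ℝ)).symm y‖
          = dist ((WithLp.equiv 2 (Fin m → ℝ)).symm y) 0 := (dist_zero_right _).symm
        _ ≤ c * dist y ((WithLp.equiv 2 (Fin m → ℝ)) 0) := by simpa using this
        _ ≤ c * (ε / c) := by
            gcongr
            simpa [dist_zero_right] using hy
        _ = ε := by field_simp
    have hvol : (0:ℝ≥0∞) < volume (closedBall (0 : Fin m → ℝ) (ε / c)) :=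
      measure_closedBall_pos _ _ (by positivity)
    have h1 : μH[(m:ℝ)] ((WithLp.equiv 2 (Fin m → ℝ)) ''
          closedBall (0 : EuclideanSpace ℝ (Fin m)) ε)
        ≤ (1:ℝ≥0∞) ^ (m:ℝ) * μH[(m:ℝ)] (closedBall (0 : EuclideanSpace ℝ (Fin m)) ε) :=
      hlip.hausdorffMeasure_image_le (by positivity) _
    have h2 : (0:ℝ≥0∞) < μH[(m:ℝ)] ((WithLp.equiv 2 (Fin m → ℝ)) ''
        closedBall (0 : EuclideanSpace ℝ (Fin m)) ε) := by
      calc (0:ℝ≥0∞) < volume (closedBall (0 : Fin m → ℝ) (ε / c)) := hvol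
        _ = μH[(m:ℝ)] (closedBall (0 : Fin m → ℝ) (ε / c)) := by rw [hpi]
        _ ≤ _ := measure_mono hsub
    calc (0:ℝ≥0∞) < _ := h2
      _ ≤ (1:ℝ≥0∞) ^ (m:ℝ) * μH[(m:ℝ)] (closedBall (0 : EuclideanSpace ℝ (Fin m)) ε) := h1
      _ = μH[(m:ℝ)] (closedBall (0 : EuclideanSpace ℝ (Fin m)) ε) := by simp
  · have himg : (WithLp.equiv 2 (Fin m → ℝ)) '' closedBall (0 : EuclideanSpace ℝ (Fin m)) ε
        ⊆ closedBall (0 : Fin m → ℝ) ε := by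
      rintro - ⟨h, hh, rfl⟩
      simp only [mem_closedBall, dist_zero_right] at hh ⊢
      have := hlip.dist_le_mul h 0
      simpa [dist_zero_right] using this.trans (by simpa using hh)
    calc μH[(m:ℝ)] (closedBall (0 : EuclideanSpace ℝ (Fin m)) ε)
        ≤ (c:ℝ≥0∞) ^ (m:ℝ) * μH[(m:ℝ)]
          ((WithLp.equiv 2 (Fin m → ℝ)) '' closedBall (0 : EuclideanSpace ℝ (Fin m)) ε) :=
          hanti.le_hausdorffMeasure_image (by positivity) _
      _ ≤ (c:ℝ≥0∞) ^ (m:ℝ) * volume (closedBall (0 : Fin m → ℝ) ε) := by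
          rw [← hpi]; exact mul_le_mul_right (measure_mono himg) _
      _ < ∞ := by
          apply ENNReal.mul_lt_top
          · exact ENNReal.rpow_lt_top_of_nonneg (by positivity) ENNReal.coe_ne_top
          · exact measure_closedBall_lt_top

theorem stmt_9 {n : ℕ} (hn : 2 ≤ n) (r ε : ℝ) (hε : 0 < ε) (hεr : ε ≤ r)
    (x z ν : EuclideanSpace ℝ (Fin n))
    (hr : dist x z = r) (hν : ν = (r⁻¹ : ℝ) • (x - z)) :
    (∀ h : EuclideanSpace ℝ (Fin n), (inner ℝ h ν : ℝ) = 0 → ‖h‖ ≤ ε →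
      r ≤ ‖x + h - z‖ ∧ ‖x + h - z‖ ≤ Real.sqrt (r ^ 2 + ε ^ 2)) ∧
    (0 ≤ (⨍ h in {h : EuclideanSpace ℝ (Fin n) | (inner ℝ h ν : ℝ) = 0 ∧ ‖h‖ ≤ ε},
        ‖x + h - z‖ ∂μH[(n : ℝ) - 1]) - r ∧
      (⨍ h in {h : EuclideanSpace ℝ (Fin n) | (inner ℝ h ν : ℝ) = 0 ∧ ‖h‖ ≤ ε},
        ‖x + h - z‖ ∂μH[(n : ℝ) - 1]) - r ≤ ε ^ 2 / (2 * r)) := by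
  have hr0 : 0 < r := lt_of_lt_of_le hε hεr
  have hv : ‖x - z‖ = r := by rw [← dist_eq_norm]; exact hr
  -- pointwise bounds
  have key : ∀ h : EuclideanSpace ℝ (Fin n), (inner ℝ h ν : ℝ) = 0 → ‖h‖ ≤ ε →
      r ≤ ‖x + h - z‖ ∧ ‖x + h - z‖ ≤ Real.sqrt (r ^ 2 + ε ^ 2) := by
    intro h hinner hnorm
    have hiv : (inner ℝ h (x - z) : ℝ) = 0 := by
      have : (inner ℝ h ν : ℝ) = r⁻¹ * inner ℝ h (x - z) := by
        rw [hν, real_inner_smul_right]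
      rw [this] at hinner
      have := hinner
      field_simp at this
      simpa using this
    have hsq : ‖x + h - z‖ ^ 2 = r ^ 2 + ‖h‖ ^ 2 := by
      have : x + h - z = h + (x - z) := by abel
      rw [this, norm_add_sq_real, hiv, hv]; ring
    constructor
    · have h1 : r ^ 2 ≤ ‖x + h - z‖ ^ 2 := by rw [hsq]; nlinarith [norm_nonneg h]
      nlinarith [norm_nonneg (x + h - z)]
    · rw [Real.le_sqrt (norm_nonneg _) (by positivity)]
      rw [hsq]; nlinarith [norm_nonneg h]
  refine ⟨key, ?_⟩
  set S : Set (EuclideanSpace ℝ (Fin n)) :=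
    {h : EuclideanSpace ℝ (Fin n) | (inner ℝ h ν : ℝ) = 0 ∧ ‖h‖ ≤ ε} with hS
  set d : ℝ := (n : ℝ) - 1 with hd
  have hd0 : 0 ≤ d := by
    have : (2:ℝ) ≤ (n:ℝ) := by exact_mod_cast hn
    simp [hd]; linarith
  -- measure of S is positive and finite
  have hν0 : ν ≠ 0 := by
    rw [hν]
    intro hcon
    have : x - z ≠ 0 := by
      intro h0
      rw [h0] at hv; simp at hv; linarith
    have := smul_eq_zero.mp hcon
    rcases this with h1 | h2
    · exact (inv_ne_zero hr0.ne') h1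
    · exact this h2
  set K : Submodule ℝ (EuclideanSpace ℝ (Fin n)) := (ℝ ∙ ν)ᗮ with hK
  have hfinK : Module.finrank ℝ K = n - 1 := by
    have h1 : Module.finrank ℝ (EuclideanSpace ℝ (Fin n)) = n := by simp
    have h2 := Submodule.finrank_add_finrank_orthogonal (K := (ℝ ∙ ν))
    rw [finrank_span_singleton hν0, h1] at h2
    rw [hK]
    omega
  have hfin1 : 1 ≤ Module.finrank ℝ K := by omega
  have hdm : d = ((Module.finrank ℝ K : ℕ) : ℝ) := by
    rw [hfinK, hd]
    have h1 : (1:ℕ) ≤ n := by omega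
    push_cast [Nat.cast_sub h1]
    ring
  -- isometric image
  let e0 : EuclideanSpace ℝ (Fin (Module.finrank ℝ K)) ≃ₗᵢ[ℝ] K :=
    (stdOrthonormalBasis ℝ K).repr.symm
  let f : EuclideanSpace ℝ (Fin (Module.finrank ℝ K)) → EuclideanSpace ℝ (Fin n) :=
    fun y => ((e0 y : K) : EuclideanSpace ℝ (Fin n))
  have hfiso : Isometry f := by
    have h1 : Isometry (fun y : K => (y : EuclideanSpace ℝ (Fin n))) :=
      Submodule.subtypeₗᵢ K |>.isometry
    exact h1.comp e0.isometry
  have hmemK : ∀ h : EuclideanSpace ℝ (Fin n), h ∈ K ↔ (inner ℝ h ν : ℝ) = 0 := by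
    intro h
    rw [hK, Submodule.mem_orthogonal_singleton_iff_inner_right]
    constructor
    · intro hh; rw [real_inner_comm]; exact hh
    · intro hh; rw [real_inner_comm]; exact hh
  have himg : f '' closedBall 0 ε = S := by
    ext h
    constructor
    · rintro ⟨y, hy, rfl⟩
      simp only [mem_closedBall, dist_zero_right] at hy
      have hfy : ‖f y‖ = ‖y‖ := by
        calc ‖f y‖ = ‖(e0 y : K)‖ := rfl
          _ = ‖y‖ := e0.norm_map y
      rw [hS]; exact ⟨(hmemK _).mp (e0 y).2, by rw [hfy]; exact hy⟩
    · rintro ⟨h1, h2⟩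
      refine ⟨e0.symm ⟨h, (hmemK _).mpr h1⟩, ?_, ?_⟩
      · simp only [mem_closedBall, dist_zero_right]
        rw [e0.symm.norm_map]
        exact h2
      · simp [f]
  -- measure of S
  have hball := euclid_ball_meas hfin1 ε hε
  have hμS : μH[d] S = μH[((Module.finrank ℝ K : ℕ):ℝ)]
      (closedBall (0 : EuclideanSpace ℝ (Fin (Module.finrank ℝ K))) ε) := by
    rw [← himg, hdm]
    exact hfiso.hausdorffMeasure_image (Or.inl (by rw [← hdm]; exact hd0)) _
  have hSpos : μH[d] S ≠ 0 := by rw [hμS]; exact hball.1.ne'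
  have hSfin : μH[d] S ≠ ∞ := by rw [hμS]; exact hball.2.ne
  -- S measurable
  have hSclosed : IsClosed S := by
    have h1 : IsClosed {h : EuclideanSpace ℝ (Fin n) | (inner ℝ h ν : ℝ) = 0} :=
      isClosed_eq (Continuous.inner continuous_id continuous_const) continuous_const
    have h2 : IsClosed {h : EuclideanSpace ℝ (Fin n) | ‖h‖ ≤ ε} :=
      isClosed_le continuous_norm continuous_const
    exact h1.inter h2
  have hSmeas : MeasurableSet S := hSclosed.measurableSet
  -- integrability
  set g : EuclideanSpace ℝ (Fin n) → ℝ := fun h => ‖x + h - z‖ with hg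
  have hgc : Continuous g := by
    apply Continuous.norm
    exact (continuous_const.add continuous_id).sub continuous_const
  have hint : IntegrableOn g S μH[d] := by
    apply Measure.integrableOn_of_bounded hSfin hgc.aestronglyMeasurable
      (M := Real.sqrt (r ^ 2 + ε ^ 2))
    filter_upwards [ae_restrict_mem hSmeas] with h hh
    rw [Real.norm_eq_abs, abs_of_nonneg (norm_nonneg _)]
    exact (key h hh.1 hh.2).2
  -- bounds on the average
  set B : ℝ := Real.sqrt (r ^ 2 + ε ^ 2) with hB
  have hμSR : 0 < (μH[d] S).toReal := ENNReal.toReal_pos hSpos hSfin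
  have hlow : (μH[d] S).toReal * r ≤ ∫ h in S, g h ∂μH[d] := by
    have := setIntegral_mono_on (integrableOn_const hSfin) hint hSmeas
      (fun h hh => (key h hh.1 hh.2).1)
    rwa [setIntegral_const, smul_eq_mul] at this
  have hhigh : ∫ h in S, g h ∂μH[d] ≤ (μH[d] S).toReal * B := by
    have := setIntegral_mono_on hint (integrableOn_const hSfin) hSmeas
      (fun h hh => (key h hh.1 hh.2).2)
    rwa [setIntegral_const, smul_eq_mul] at this
  have havg : (⨍ h in S, g h ∂μH[d]) = (μH[d] S).toReal⁻¹ * ∫ h in S, g h ∂μH[d] := by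
    rw [setAverage_eq, smul_eq_mul, measureReal_def]
  have hBle : B ≤ r + ε ^ 2 / (2 * r) := by
    rw [hB, Real.sqrt_le_iff]
    refine ⟨by positivity, ?_⟩
    have h2r : (0:ℝ) < 2 * r := by linarith
    have hq : 2 * r * (ε ^ 2 / (2 * r)) = ε ^ 2 := by field_simp
    nlinarith [sq_nonneg (ε ^ 2 / (2 * r))]
  constructor
  · have : r ≤ ⨍ h in S, g h ∂μH[d] := by
      rw [havg, inv_mul_eq_div, le_div_iff₀ hμSR, mul_comm]
      exact hlow
    linarith
  · have : (⨍ h in S, g h ∂μH[d]) ≤ B := by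
      rw [havg]
      calc (μH[d] S).toReal⁻¹ * ∫ h in S, g h ∂μH[d]
          ≤ (μH[d] S).toReal⁻¹ * ((μH[d] S).toReal * B) := by
            apply mul_le_mul_of_nonneg_left hhigh (by positivity)
        _ = B := by field_simp
    linarith
end
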